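/- Fix an integer n ≥ 1. If the minimum of ‖W‖_* over all matrices W ∈ ℝ^{(2n+2)×(2n)} satisfying the one-hop-plus-identity margin constraints is attained, then it is attained by a matrix of restricted form whose parameters satisfy a1 ≥ 1, b1 ≥ 1, d1 ≥ 1, a1+a2+e ≥ c1+c2+g+1, d1+d2+h ≥ b1+b2+f+1, and b1+b2 ≥ d1+d2+1. -/

import Mathlib

/-- The nuclear norm of a real matrix: the trace of the positive semidefinite
square root of `Wᵀ * W` (equivalently, the sum of the singular values of `W`). -/
noncomputable def nuclearNorm {m k : Type*} [Fintype m] [Fintype k] [DecidableEq k]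
    (W : Matrix m k ℝ) : ℝ :=
  ((Matrix.posSemidef_conjTranspose_mul_self W).1.eigenvectorUnitary.1 *
    Matrix.diagonal ((RCLike.ofReal : ℝ → ℝ) ∘ (√·) ∘ (Matrix.posSemidef_conjTranspose_mul_self W).1.eigenvalues) *
    (star (Matrix.posSemidef_conjTranspose_mul_self W).1.eigenvectorUnitary :
      Matrix k k ℝ)).trace

/-- The restricted-form matrix in `ℝ^{(2n+2)×(2n)}`.  Rows are indexed by the input
tokens `a_1,…,a_n` (`Sum.inl i`), `b_1,…,b_n` (`Sum.inr (Sum.inl i)`) and the relation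
tokens `r_1, r_2` (`Sum.inr (Sum.inr k)`, `k = 0, 1`); columns by the output tokens
`b_1,…,b_n` (`Sum.inl j`) and `c_1,…,c_n` (`Sum.inr j`). -/
def restrictedW (n : ℕ) (a1 a2 b1 b2 c1 c2 d1 d2 e f g h : ℝ) :
    Matrix (Fin n ⊕ Fin n ⊕ Fin 2) (Fin n ⊕ Fin n) ℝ :=
  fun r y =>
    match r, y with
    | Sum.inl i, Sum.inl j => (if i = j then a1 else 0) + a2
    | Sum.inl i, Sum.inr j => (if i = j then c1 else 0) + c2
    | Sum.inr (Sum.inl i), Sum.inl j => (if i = j then b1 else 0) + b2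
    | Sum.inr (Sum.inl i), Sum.inr j => (if i = j then d1 else 0) + d2
    | Sum.inr (Sum.inr k), Sum.inl _ => if k = 0 then e else f
    | Sum.inr (Sum.inr k), Sum.inr _ => if k = 0 then g else h

/-- The one-hop margin constraints: for every `i`,
`W[a_i,b_i] + W[r_1,b_i] ≥ W[a_i,y] + W[r_1,y] + 1` for every output token `y ≠ b_i`, and
`W[b_i,c_i] + W[r_2,c_i] ≥ W[b_i,y] + W[r_2,y] + 1` for every output token `y ≠ c_i`. -/
def OneHopMargin (n : ℕ) (W : Matrix (Fin n ⊕ Fin n ⊕ Fin 2) (Fin n ⊕ Fin n) ℝ) : Prop :=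
  ∀ i : Fin n,
    (∀ y : Fin n ⊕ Fin n, y ≠ Sum.inl i →
      W (Sum.inl i) (Sum.inl i) + W (Sum.inr (Sum.inr 0)) (Sum.inl i)
        ≥ W (Sum.inl i) y + W (Sum.inr (Sum.inr 0)) y + 1) ∧
    (∀ y : Fin n ⊕ Fin n, y ≠ Sum.inr i →
      W (Sum.inr (Sum.inl i)) (Sum.inr i) + W (Sum.inr (Sum.inr 1)) (Sum.inr i)
        ≥ W (Sum.inr (Sum.inl i)) y + W (Sum.inr (Sum.inr 1)) y + 1)

/-- The identity-bridge margin constraints: for every `i`,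
`W[b_i,b_i] ≥ W[b_i,y] + 1` for every output token `y ≠ b_i`. -/
def IdentityMargin (n : ℕ) (W : Matrix (Fin n ⊕ Fin n ⊕ Fin 2) (Fin n ⊕ Fin n) ℝ) : Prop :=
  ∀ i : Fin n, ∀ y : Fin n ⊕ Fin n, y ≠ Sum.inl i →
    W (Sum.inr (Sum.inl i)) (Sum.inl i) ≥ W (Sum.inr (Sum.inl i)) y + 1



section NuclearAux
open Matrix
variable {m k : Type*} [Fintype m] [Fintype k] [DecidableEq k]

open scoped MatrixOrder in
lemma nuclearNorm_eq (W : Matrix m k ℝ) (V : Matrix k k ℝ) (lam : k → ℝ)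
    (h1 : Vᴴ * V = 1) (h2 : V * Vᴴ = 1)
    (h3 : Vᴴ * (Wᴴ * W) * V = diagonal lam) (hlam : ∀ j, 0 ≤ lam j) :
    nuclearNorm W = ∑ j, Real.sqrt (lam j) := by
  have hA := Matrix.posSemidef_conjTranspose_mul_self W
  have hAeq : Wᴴ * W = V * diagonal lam * Vᴴ := by
    rw [← h3]
    calc Wᴴ * W = (V * Vᴴ) * (Wᴴ * W) * (V * Vᴴ) := by rw [h2, one_mul, mul_one]
    _ = V * (Vᴴ * (Wᴴ * W) * V) * Vᴴ := by simp only [mul_assoc]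
  set B := V * diagonal (fun j => Real.sqrt (lam j)) * Vᴴ with hB
  have hBpsd : B.PosSemidef :=
    (Matrix.PosSemidef.diagonal (fun j => Real.sqrt_nonneg (lam j))).mul_mul_conjTranspose_same V
  have hBsq : B ^ 2 = Wᴴ * W := by
    rw [pow_two, hB, hAeq]
    calc V * diagonal (fun j => Real.sqrt (lam j)) * Vᴴ *
          (V * diagonal (fun j => Real.sqrt (lam j)) * Vᴴ)
        = V * (diagonal (fun j => Real.sqrt (lam j)) * (Vᴴ * V) *
            diagonal (fun j => Real.sqrt (lam j))) * Vᴴ := by simp only [mul_assoc]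
      _ = V * diagonal lam * Vᴴ := by
          rw [h1, mul_one, diagonal_mul_diagonal]
          have : (fun j => Real.sqrt (lam j) * Real.sqrt (lam j)) = lam :=
            funext fun j => Real.mul_self_sqrt (hlam j)
          rw [this]
  set S : Matrix k k ℝ := (hA.1.eigenvectorUnitary : Matrix k k ℝ) *
    Matrix.diagonal ((RCLike.ofReal : ℝ → ℝ) ∘ (√·) ∘ hA.1.eigenvalues) *
    (star hA.1.eigenvectorUnitary : Matrix k k ℝ) with hS
  have hUU : (star hA.1.eigenvectorUnitary : Matrix k k ℝ) *
      (hA.1.eigenvectorUnitary : Matrix k k ℝ) = 1 := Unitary.coe_star_mul_self _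
  have hSpsd : S.PosSemidef :=
    (Matrix.PosSemidef.diagonal (fun j => Real.sqrt_nonneg (hA.1.eigenvalues j))).mul_mul_conjTranspose_same
      (hA.1.eigenvectorUnitary : Matrix k k ℝ)
  have hSsq : S * S = Wᴴ * W := by
    have hsp := hA.1.spectral_theorem
    rw [Unitary.conjStarAlgAut_apply] at hsp
    rw [hsp, hS]
    calc _ = (hA.1.eigenvectorUnitary : Matrix k k ℝ) *
        (Matrix.diagonal ((RCLike.ofReal : ℝ → ℝ) ∘ (√·) ∘ hA.1.eigenvalues) *
          ((star hA.1.eigenvectorUnitary : Matrix k k ℝ) * (hA.1.eigenvectorUnitary : Matrix k k ℝ)) *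
          Matrix.diagonal ((RCLike.ofReal : ℝ → ℝ) ∘ (√·) ∘ hA.1.eigenvalues)) *
        (star hA.1.eigenvectorUnitary : Matrix k k ℝ) := by simp only [mul_assoc]
      _ = _ := by
        rw [hUU, mul_one, diagonal_mul_diagonal]
        congr 3
        funext j
        simp only [Function.comp_apply]
        exact Real.mul_self_sqrt (hA.eigenvalues_nonneg j)
  have hBe : B = S := by
    rw [← CFC.sqrt_unique (pow_two B ▸ hBsq) hBpsd.nonneg, CFC.sqrt_unique hSsq hSpsd.nonneg]
  change S.trace = _
  rw [← hBe, hB, Matrix.trace_mul_comm, ← mul_assoc, h1, one_mul, trace_diagonal]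

lemma exists_spectral (W : Matrix m k ℝ) :
    ∃ (V : Matrix k k ℝ) (lam : k → ℝ),
      Vᴴ * V = 1 ∧ V * Vᴴ = 1 ∧ Vᴴ * (Wᴴ * W) * V = diagonal lam ∧ ∀ j, 0 ≤ lam j := by
  have hA := Matrix.posSemidef_conjTranspose_mul_self W
  refine ⟨hA.1.eigenvectorUnitary, hA.1.eigenvalues, ?_, ?_, ?_, hA.eigenvalues_nonneg⟩
  · simpa [Matrix.star_eq_conjTranspose] using
      ((Matrix.mem_unitaryGroup_iff').mp (Matrix.IsHermitian.eigenvectorUnitary hA.1).2)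
  · simpa [Matrix.star_eq_conjTranspose] using
      ((Matrix.mem_unitaryGroup_iff).mp (Matrix.IsHermitian.eigenvectorUnitary hA.1).2)
  · have := hA.1.conjStarAlgAut_star_eigenvectorUnitary
    rw [Unitary.conjStarAlgAut_apply] at this
    simpa [Matrix.star_eq_conjTranspose] using this

lemma entry_col (P Q : Matrix m k ℝ) (j j' : k) :
    (Pᴴ * Q) j j' = ∑ r, P r j * Q r j' := by
  simp [Matrix.mul_apply, Matrix.conjTranspose_apply]

lemma quad_entry (M : Matrix k k ℝ) (V : Matrix k k ℝ) (j : k) :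
    (Vᴴ * M * V) j j = (fun x => V x j) ⬝ᵥ (M *ᵥ (fun x => V x j)) := by
  simp only [Matrix.mul_apply, Matrix.conjTranspose_apply, dotProduct, Matrix.mulVec,
    star_trivial, Finset.sum_mul, Finset.mul_sum]
  rw [Finset.sum_comm]
  apply Finset.sum_congr rfl
  intro x _
  apply Finset.sum_congr rfl
  intro y _
  ring

lemma dual_le (W U : Matrix m k ℝ)
    (hU : ∀ x : k → ℝ, x ⬝ᵥ ((Uᴴ * U) *ᵥ x) ≤ x ⬝ᵥ x) :
    (Uᴴ * W).trace ≤ nuclearNorm W := by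
  obtain ⟨V, lam, h1, h2, h3, hlam⟩ := exists_spectral W
  rw [nuclearNorm_eq W V lam h1 h2 h3 hlam]
  have h3' : Vᴴ * (Wᴴ * (W * V)) = diagonal lam := by
    simpa only [Matrix.mul_assoc] using h3
  have htr : (Uᴴ * W).trace = ((U * V)ᴴ * (W * V)).trace := by
    have hMM : (U * V)ᴴ * (W * V) = Vᴴ * ((Uᴴ * W) * V) := by
      rw [Matrix.conjTranspose_mul]; simp only [Matrix.mul_assoc]
    rw [hMM, Matrix.trace_mul_comm Vᴴ (Uᴴ * W * V), Matrix.mul_assoc (Uᴴ * W) V Vᴴ, h2,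
      Matrix.mul_one]
  rw [htr, Matrix.trace]
  apply Finset.sum_le_sum
  intro j _
  have hdiag : (Matrix.diag ((U * V)ᴴ * (W * V))) j = ∑ r, (U * V) r j * (W * V) r j :=
    entry_col _ _ j j
  rw [hdiag]
  have hcs := Real.sum_mul_le_sqrt_mul_sqrt Finset.univ
    (fun r => (U * V) r j) (fun r => (W * V) r j)
  have hWV : ∑ r, ((W * V) r j) ^ 2 = lam j := by
    have : ((W * V)ᴴ * (W * V)) j j = lam j := by
      rw [Matrix.conjTranspose_mul, Matrix.mul_assoc, h3']
      simp [Matrix.diagonal_apply_eq]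
    rw [← this, entry_col]
    apply Finset.sum_congr rfl
    intro r _
    ring
  have hUV : ∑ r, ((U * V) r j) ^ 2 ≤ 1 := by
    have e1 : ((U * V)ᴴ * (U * V)) j j = ∑ r, ((U * V) r j) ^ 2 := by
      rw [entry_col]
      apply Finset.sum_congr rfl
      intro r _
      ring
    have e2 : ((U * V)ᴴ * (U * V)) j j = (Vᴴ * (Uᴴ * U) * V) j j := by
      have : (U * V)ᴴ * (U * V) = Vᴴ * (Uᴴ * U) * V := by
        rw [Matrix.conjTranspose_mul]; simp only [Matrix.mul_assoc]
      rw [this]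
    have e3 : (Vᴴ * (Uᴴ * U) * V) j j ≤ 1 := by
      rw [quad_entry]
      have := hU (fun x => V x j)
      refine this.trans_eq ?_
      have : (fun x => V x j) ⬝ᵥ (fun x => V x j) = (Vᴴ * V) j j := by
        rw [entry_col]; rfl
      rw [this, h1]
      simp
    rw [← e1, e2] at *
    linarith [e3, e2]
  calc ∑ r, (U * V) r j * (W * V) r j
      ≤ Real.sqrt (∑ r, ((U * V) r j) ^ 2) * Real.sqrt (∑ r, ((W * V) r j) ^ 2) := hcs
    _ ≤ 1 * Real.sqrt (lam j) := by
        rw [hWV]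
        apply mul_le_mul_of_nonneg_right _ (Real.sqrt_nonneg _)
        calc Real.sqrt (∑ r, ((U * V) r j) ^ 2) ≤ Real.sqrt 1 := Real.sqrt_le_sqrt hUV
          _ = 1 := Real.sqrt_one
    _ = Real.sqrt (lam j) := one_mul _

lemma exists_dual (W : Matrix m k ℝ) :
    ∃ U : Matrix m k ℝ,
      (∀ x : k → ℝ, x ⬝ᵥ ((Uᴴ * U) *ᵥ x) ≤ x ⬝ᵥ x) ∧ (Uᴴ * W).trace = nuclearNorm W := by
  obtain ⟨V, lam, h1, h2, h3, hlam⟩ := exists_spectral W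
  set p : k → ℝ := fun j => if lam j = 0 then 0 else (Real.sqrt (lam j))⁻¹ with hp
  refine ⟨W * V * diagonal p * Vᴴ, ?_, ?_⟩
  · -- contraction
    set U := W * V * diagonal p * Vᴴ with hUdef
    have hsqrt_ne : ∀ j, lam j ≠ 0 → Real.sqrt (lam j) ≠ 0 := fun j hj =>
      Real.sqrt_ne_zero'.mpr (lt_of_le_of_ne (hlam j) (Ne.symm hj))
    have hUU : Uᴴ * U = V * diagonal (fun j => if lam j = 0 then 0 else 1) * Vᴴ := by
      have hdiagH : (diagonal p)ᴴ = diagonal p := by simp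
      have : Uᴴ = V * diagonal p * Vᴴ * Wᴴ := by
        rw [hUdef]
        simp only [Matrix.conjTranspose_mul, hdiagH, Matrix.conjTranspose_conjTranspose]
        simp only [Matrix.mul_assoc]
      rw [this, hUdef]
      calc V * diagonal p * Vᴴ * Wᴴ * (W * V * diagonal p * Vᴴ)
          = V * (diagonal p * (Vᴴ * (Wᴴ * W) * V) * diagonal p) * Vᴴ := by
            simp only [Matrix.mul_assoc]
        _ = V * (diagonal p * diagonal lam * diagonal p) * Vᴴ := by rw [h3]
        _ = V * diagonal (fun j => if lam j = 0 then 0 else 1) * Vᴴ := by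
            rw [Matrix.diagonal_mul_diagonal, Matrix.diagonal_mul_diagonal]
            have hfun : (fun j => p j * lam j * p j) =
                (fun j => if lam j = 0 then (0 : ℝ) else 1) := by
              funext j
              by_cases hj : lam j = 0
              · simp [hp, hj]
              · have hs := hsqrt_ne j hj
                simp only [hp, if_neg hj]
                rw [← Real.mul_self_sqrt (hlam j)]
                field_simp
                rw [Real.sqrt_sq (Real.sqrt_nonneg _)]
            rw [hfun]
    intro x
    rw [hUU]
    set y : k → ℝ := fun j => (Vᴴ *ᵥ x) j with hy
    have key : ∀ (d : k → ℝ), x ⬝ᵥ ((V * diagonal d * Vᴴ) *ᵥ x) = ∑ j, d j * (y j) ^ 2 := by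
      intro d
      rw [← Matrix.mulVec_mulVec, ← Matrix.mulVec_mulVec, Matrix.dotProduct_mulVec x V]
      have hxv : x ᵥ* V = y := by
        funext j
        simp [hy, Matrix.vecMul, Matrix.mulVec, dotProduct, Matrix.conjTranspose_apply,
          mul_comm]
      rw [hxv]
      simp only [Matrix.mulVec_diagonal, dotProduct]
      apply Finset.sum_congr rfl
      intro j _
      ring
    have hxx : x ⬝ᵥ x = ∑ j, (y j) ^ 2 := by
      have h1' := key (fun _ => (1 : ℝ))
      rw [Matrix.diagonal_one, Matrix.mul_one, h2] at h1'
      simpa using h1'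
    rw [key, hxx]
    apply Finset.sum_le_sum
    intro j _
    by_cases hj : lam j = 0 <;> simp [hj] <;> positivity
  · -- trace
    set U := W * V * diagonal p * Vᴴ with hUdef
    have hdiagH : (diagonal p)ᴴ = diagonal p := by simp
    have hUH : Uᴴ = V * diagonal p * Vᴴ * Wᴴ := by
      rw [hUdef]
      simp only [Matrix.conjTranspose_mul, hdiagH, Matrix.conjTranspose_conjTranspose]
      simp only [Matrix.mul_assoc]
    have : Uᴴ * W = V * (diagonal p * (Vᴴ * (Wᴴ * W))) := by
      rw [hUH]; simp only [Matrix.mul_assoc]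
    rw [this, Matrix.trace_mul_comm V (diagonal p * (Vᴴ * (Wᴴ * W)))]
    have : diagonal p * (Vᴴ * (Wᴴ * W)) * V = diagonal p * diagonal lam := by
      rw [Matrix.mul_assoc (diagonal p) _ _, h3]
    rw [this, Matrix.diagonal_mul_diagonal, Matrix.trace_diagonal,
      nuclearNorm_eq W V lam h1 h2 h3 hlam]
    apply Finset.sum_congr rfl
    intro j _
    by_cases hj : lam j = 0
    · simp [hp, hj]
    · have hs : Real.sqrt (lam j) ≠ 0 :=
        Real.sqrt_ne_zero'.mpr (lt_of_le_of_ne (hlam j) (Ne.symm hj))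
      have hms : Real.sqrt (lam j) * Real.sqrt (lam j) = lam j := Real.mul_self_sqrt (hlam j)
      simp only [hp, if_neg hj]
      field_simp
      rw [Real.sq_sqrt (hlam j)]

lemma nuclearNorm_add_le (W₁ W₂ : Matrix m k ℝ) :
    nuclearNorm (W₁ + W₂) ≤ nuclearNorm W₁ + nuclearNorm W₂ := by
  obtain ⟨U, hU, htr⟩ := exists_dual (W₁ + W₂)
  rw [← htr, Matrix.mul_add, Matrix.trace_add]
  exact add_le_add (dual_le W₁ U hU) (dual_le W₂ U hU)

lemma nuclearNorm_zero : nuclearNorm (0 : Matrix m k ℝ) = 0 := by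
  rw [nuclearNorm_eq (0 : Matrix m k ℝ) 1 (fun _ => 0) (by simp) (by simp) (by simp)
    (fun _ => le_refl 0)]
  simp

lemma nuclearNorm_smul (c : ℝ) (hc : 0 ≤ c) (W : Matrix m k ℝ) :
    nuclearNorm (c • W) = c * nuclearNorm W := by
  obtain ⟨V, lam, h1, h2, h3, hlam⟩ := exists_spectral W
  have h3' : Vᴴ * ((c • W)ᴴ * (c • W)) * V = diagonal (fun j => c * c * lam j) := by
    have : (c • W)ᴴ * (c • W) = (c * c) • (Wᴴ * W) := by
      rw [Matrix.conjTranspose_smul]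
      simp [Matrix.smul_mul, Matrix.mul_smul, smul_smul]
    rw [this, Matrix.mul_smul, Matrix.smul_mul, h3, ← Matrix.diagonal_smul]
    rfl
  rw [nuclearNorm_eq (c • W) V (fun j => c * c * lam j) h1 h2 h3'
    (fun j => mul_nonneg (mul_self_nonneg c) (hlam j)),
    nuclearNorm_eq W V lam h1 h2 h3 hlam, Finset.mul_sum]
  apply Finset.sum_congr rfl
  intro j _
  rw [Real.sqrt_mul (mul_self_nonneg c), Real.sqrt_mul_self hc]

lemma nuclearNorm_submatrix {m' k' : Type*} [Fintype m'] [Fintype k'] [DecidableEq k']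
    (W : Matrix m k ℝ) (er : m' ≃ m) (ec : k' ≃ k) :
    nuclearNorm (W.submatrix er ec) = nuclearNorm W := by
  obtain ⟨V, lam, h1, h2, h3, hlam⟩ := exists_spectral W
  have e1 : (V.submatrix ec ec)ᴴ * V.submatrix ec ec = 1 := by
    rw [Matrix.conjTranspose_submatrix, Matrix.submatrix_mul_equiv, h1,
      Matrix.submatrix_one_equiv]
  have e2 : V.submatrix ec ec * (V.submatrix ec ec)ᴴ = 1 := by
    rw [Matrix.conjTranspose_submatrix, Matrix.submatrix_mul_equiv, h2,
      Matrix.submatrix_one_equiv]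
  have e3 : (V.submatrix ec ec)ᴴ * ((W.submatrix er ec)ᴴ * W.submatrix er ec) *
      V.submatrix ec ec = diagonal (lam ∘ ec) := by
    rw [Matrix.conjTranspose_submatrix, Matrix.conjTranspose_submatrix,
      Matrix.submatrix_mul_equiv, Matrix.submatrix_mul_equiv, Matrix.submatrix_mul_equiv,
      h3]
    exact Matrix.submatrix_diagonal_equiv lam ec
  rw [nuclearNorm_eq _ _ _ e1 e2 e3 (fun j => hlam (ec j)),
    nuclearNorm_eq W V lam h1 h2 h3 hlam]
  exact Equiv.sum_comp ec (fun j => Real.sqrt (lam j))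

lemma nuclearNorm_sum_le {ι : Type*} (s : Finset ι) (F : ι → Matrix m k ℝ) :
    nuclearNorm (∑ i ∈ s, F i) ≤ ∑ i ∈ s, nuclearNorm (F i) := by
  classical
  induction s using Finset.induction_on with
  | empty => simp [nuclearNorm_zero]
  | insert _ _ hnotmem ih =>
    rw [Finset.sum_insert hnotmem, Finset.sum_insert hnotmem]
    exact (nuclearNorm_add_le _ _).trans (by linarith)

end NuclearAux

/-! Permutation symmetrization machinery -/

lemma perm_sum_single {n : ℕ} (G : Fin n → ℝ) (i i' : Fin n) :
    ∑ π : Equiv.Perm (Fin n), G (π i) = ∑ π : Equiv.Perm (Fin n), G (π i') := by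
  apply Fintype.sum_equiv (Equiv.mulRight (Equiv.swap i' i))
  intro π
  simp [Equiv.Perm.mul_apply]

lemma exists_perm_pair {n : ℕ} (i j i' j' : Fin n) (hij : i ≠ j) (hij' : i' ≠ j') :
    ∃ τ : Equiv.Perm (Fin n), τ i' = i ∧ τ j' = j := by
  classical
  have hj1i : Equiv.swap i' i j' ≠ i := by
    intro hc
    apply hij'
    exact ((Equiv.swap i' i).injective (hc.trans (Equiv.swap_apply_left i' i).symm)).symm
  refine ⟨(Equiv.swap i' i).trans (Equiv.swap (Equiv.swap i' i j') j), ?_, ?_⟩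
  · simp only [Equiv.trans_apply, Equiv.swap_apply_left]
    exact Equiv.swap_apply_of_ne_of_ne (Ne.symm hj1i) hij
  · simp only [Equiv.trans_apply]
    exact Equiv.swap_apply_left _ _

lemma perm_sum_pair {n : ℕ} (G : Fin n → Fin n → ℝ) (i j i' j' : Fin n)
    (hij : i ≠ j) (hij' : i' ≠ j') :
    ∑ π : Equiv.Perm (Fin n), G (π i) (π j) = ∑ π : Equiv.Perm (Fin n), G (π i') (π j') := by
  obtain ⟨τ, hti, htj⟩ := exists_perm_pair i j i' j' hij hij'
  apply Fintype.sum_equiv (Equiv.mulRight τ)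
  intro π
  simp [Equiv.Perm.mul_apply, hti, htj]

def rowE (n : ℕ) (π : Equiv.Perm (Fin n)) :
    (Fin n ⊕ Fin n ⊕ Fin 2) ≃ (Fin n ⊕ Fin n ⊕ Fin 2) :=
  Equiv.sumCongr π (Equiv.sumCongr π (Equiv.refl (Fin 2)))

def colE (n : ℕ) (π : Equiv.Perm (Fin n)) : (Fin n ⊕ Fin n) ≃ (Fin n ⊕ Fin n) :=
  Equiv.sumCongr π π

@[simp] lemma rowE_inl {n : ℕ} (π : Equiv.Perm (Fin n)) (i : Fin n) :
    rowE n π (Sum.inl i) = Sum.inl (π i) := rfl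
@[simp] lemma rowE_inrl {n : ℕ} (π : Equiv.Perm (Fin n)) (i : Fin n) :
    rowE n π (Sum.inr (Sum.inl i)) = Sum.inr (Sum.inl (π i)) := rfl
@[simp] lemma rowE_inrr {n : ℕ} (π : Equiv.Perm (Fin n)) (t : Fin 2) :
    rowE n π (Sum.inr (Sum.inr t)) = Sum.inr (Sum.inr t) := rfl
@[simp] lemma colE_inl {n : ℕ} (π : Equiv.Perm (Fin n)) (i : Fin n) :
    colE n π (Sum.inl i) = Sum.inl (π i) := rfl
@[simp] lemma colE_inr {n : ℕ} (π : Equiv.Perm (Fin n)) (i : Fin n) :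
    colE n π (Sum.inr i) = Sum.inr (π i) := rfl

def permW (n : ℕ) (W : Matrix (Fin n ⊕ Fin n ⊕ Fin 2) (Fin n ⊕ Fin n) ℝ)
    (π : Equiv.Perm (Fin n)) : Matrix (Fin n ⊕ Fin n ⊕ Fin 2) (Fin n ⊕ Fin n) ℝ :=
  W.submatrix (rowE n π) (colE n π)

@[simp] lemma permW_apply {n : ℕ} (W : Matrix (Fin n ⊕ Fin n ⊕ Fin 2) (Fin n ⊕ Fin n) ℝ)
    (π : Equiv.Perm (Fin n)) (r y) : permW n W π r y = W (rowE n π r) (colE n π y) := rfl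

lemma permW_margin {n : ℕ} {W : Matrix (Fin n ⊕ Fin n ⊕ Fin 2) (Fin n ⊕ Fin n) ℝ}
    (hW : OneHopMargin n W ∧ IdentityMargin n W) (π : Equiv.Perm (Fin n)) :
    OneHopMargin n (permW n W π) ∧ IdentityMargin n (permW n W π) := by
  obtain ⟨hOne, hId⟩ := hW
  refine ⟨fun i => ⟨fun y hy => ?_, fun y hy => ?_⟩, fun i y hy => ?_⟩
  · have hy' : colE n π y ≠ Sum.inl (π i) := by
      intro hc
      exact hy ((colE n π).injective (by simpa using hc))
    have := (hOne (π i)).1 (colE n π y) hy'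
    simpa using this
  · have hy' : colE n π y ≠ Sum.inr (π i) := by
      intro hc
      exact hy ((colE n π).injective (by simpa using hc))
    have := (hOne (π i)).2 (colE n π y) hy'
    simpa using this
  · have hy' : colE n π y ≠ Sum.inl (π i) := by
      intro hc
      exact hy ((colE n π).injective (by simpa using hc))
    have := hId (π i) (colE n π y) hy'
    simpa using this

noncomputable def avgW (n : ℕ) (W : Matrix (Fin n ⊕ Fin n ⊕ Fin 2) (Fin n ⊕ Fin n) ℝ) :
    Matrix (Fin n ⊕ Fin n ⊕ Fin 2) (Fin n ⊕ Fin n) ℝ :=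
  ((Fintype.card (Equiv.Perm (Fin n)) : ℝ))⁻¹ • ∑ π : Equiv.Perm (Fin n), permW n W π

lemma avgW_apply {n : ℕ} (W : Matrix (Fin n ⊕ Fin n ⊕ Fin 2) (Fin n ⊕ Fin n) ℝ) (r y) :
    avgW n W r y = ((Fintype.card (Equiv.Perm (Fin n)) : ℝ))⁻¹ *
      ∑ π : Equiv.Perm (Fin n), W (rowE n π r) (colE n π y) := by
  simp [avgW, Matrix.sum_apply]

lemma avg_ineq2 {n : ℕ} (f1 f2 g1 g2 : Equiv.Perm (Fin n) → ℝ)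
    (h : ∀ π, g1 π + g2 π + 1 ≤ f1 π + f2 π) :
    ((Fintype.card (Equiv.Perm (Fin n)) : ℝ))⁻¹ * ∑ π, g1 π +
      ((Fintype.card (Equiv.Perm (Fin n)) : ℝ))⁻¹ * ∑ π, g2 π + 1 ≤
    ((Fintype.card (Equiv.Perm (Fin n)) : ℝ))⁻¹ * ∑ π, f1 π +
      ((Fintype.card (Equiv.Perm (Fin n)) : ℝ))⁻¹ * ∑ π, f2 π := by
  set c : ℝ := ((Fintype.card (Equiv.Perm (Fin n)) : ℝ))⁻¹ with hcdef
  have hcard : (0 : ℝ) < (Fintype.card (Equiv.Perm (Fin n)) : ℝ) := by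
    exact_mod_cast Fintype.card_pos
  have hc : 0 ≤ c := by positivity
  have hcN : c * (Fintype.card (Equiv.Perm (Fin n)) : ℝ) = 1 :=
    inv_mul_cancel₀ (ne_of_gt hcard)
  have hsum : ∑ π, (g1 π + g2 π + 1) ≤ ∑ π, (f1 π + f2 π) :=
    Finset.sum_le_sum fun π _ => h π
  simp only [Finset.sum_add_distrib, Finset.sum_const, Finset.card_univ, nsmul_eq_mul,
    mul_one] at hsum
  nlinarith [mul_le_mul_of_nonneg_left hsum hc]

lemma avg_ineq1 {n : ℕ} (f1 g1 : Equiv.Perm (Fin n) → ℝ)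
    (h : ∀ π, g1 π + 1 ≤ f1 π) :
    ((Fintype.card (Equiv.Perm (Fin n)) : ℝ))⁻¹ * ∑ π, g1 π + 1 ≤
    ((Fintype.card (Equiv.Perm (Fin n)) : ℝ))⁻¹ * ∑ π, f1 π := by
  have := avg_ineq2 f1 (fun _ => 0) g1 (fun _ => 0) (fun π => by simpa using h π)
  simpa using this

lemma avgW_margin {n : ℕ} {W : Matrix (Fin n ⊕ Fin n ⊕ Fin 2) (Fin n ⊕ Fin n) ℝ}
    (hW : OneHopMargin n W ∧ IdentityMargin n W) :
    OneHopMargin n (avgW n W) ∧ IdentityMargin n (avgW n W) := by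
  refine ⟨fun i => ⟨fun y hy => ?_, fun y hy => ?_⟩, fun i y hy => ?_⟩
  · simp only [ge_iff_le, avgW_apply]
    exact avg_ineq2 _ _ _ _ (fun π => ((permW_margin hW π).1 i).1 y hy)
  · simp only [ge_iff_le, avgW_apply]
    exact avg_ineq2 _ _ _ _ (fun π => ((permW_margin hW π).1 i).2 y hy)
  · simp only [ge_iff_le, avgW_apply]
    exact avg_ineq1 _ _ (fun π => (permW_margin hW π).2 i y hy)

lemma avgW_nn {n : ℕ} (W : Matrix (Fin n ⊕ Fin n ⊕ Fin 2) (Fin n ⊕ Fin n) ℝ) :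
    nuclearNorm (avgW n W) ≤ nuclearNorm W := by
  have hcard : (0 : ℝ) < (Fintype.card (Equiv.Perm (Fin n)) : ℝ) := by
    exact_mod_cast Fintype.card_pos
  have hc : (0:ℝ) ≤ ((Fintype.card (Equiv.Perm (Fin n)) : ℝ))⁻¹ := by positivity
  rw [avgW, nuclearNorm_smul _ hc]
  calc ((Fintype.card (Equiv.Perm (Fin n)) : ℝ))⁻¹ *
        nuclearNorm (∑ π : Equiv.Perm (Fin n), permW n W π)
      ≤ ((Fintype.card (Equiv.Perm (Fin n)) : ℝ))⁻¹ *
        ∑ π : Equiv.Perm (Fin n), nuclearNorm (permW n W π) :=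
        mul_le_mul_of_nonneg_left (nuclearNorm_sum_le _ _) hc
    _ = ((Fintype.card (Equiv.Perm (Fin n)) : ℝ))⁻¹ *
        ((Fintype.card (Equiv.Perm (Fin n)) : ℝ) * nuclearNorm W) := by
        have hper : ∀ π : Equiv.Perm (Fin n), nuclearNorm (permW n W π) = nuclearNorm W :=
          fun π => nuclearNorm_submatrix W (rowE n π) (colE n π)
        rw [Finset.sum_congr rfl (fun π _ => hper π)]
        rw [Finset.sum_const, Finset.card_univ, nsmul_eq_mul]
    _ = nuclearNorm W := by
        rw [← mul_assoc, inv_mul_cancel₀ (ne_of_gt hcard), one_mul]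

lemma avgW_diag {n : ℕ} (W : Matrix (Fin n ⊕ Fin n ⊕ Fin 2) (Fin n ⊕ Fin n) ℝ)
    (u : Fin n → (Fin n ⊕ Fin n ⊕ Fin 2)) (v : Fin n → (Fin n ⊕ Fin n))
    (hu : ∀ π i, rowE n π (u i) = u (π i)) (hv : ∀ π i, colE n π (v i) = v (π i))
    (i i' : Fin n) : avgW n W (u i) (v i) = avgW n W (u i') (v i') := by
  rw [avgW_apply, avgW_apply]
  congr 1
  have e : ∀ π : Equiv.Perm (Fin n), ∀ a b, W (rowE n π (u a)) (colE n π (v b)) =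
      W (u (π a)) (v (π b)) := fun π a b => by rw [hu, hv]
  rw [Finset.sum_congr rfl (fun π _ => e π i i), Finset.sum_congr rfl (fun π _ => e π i' i')]
  exact perm_sum_single (fun a => W (u a) (v a)) i i'

lemma avgW_off {n : ℕ} (W : Matrix (Fin n ⊕ Fin n ⊕ Fin 2) (Fin n ⊕ Fin n) ℝ)
    (u : Fin n → (Fin n ⊕ Fin n ⊕ Fin 2)) (v : Fin n → (Fin n ⊕ Fin n))
    (hu : ∀ π i, rowE n π (u i) = u (π i)) (hv : ∀ π i, colE n π (v i) = v (π i))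
    (i j i' j' : Fin n) (hij : i ≠ j) (hij' : i' ≠ j') :
    avgW n W (u i) (v j) = avgW n W (u i') (v j') := by
  rw [avgW_apply, avgW_apply]
  congr 1
  have e : ∀ π : Equiv.Perm (Fin n), ∀ a b, W (rowE n π (u a)) (colE n π (v b)) =
      W (u (π a)) (v (π b)) := fun π a b => by rw [hu, hv]
  rw [Finset.sum_congr rfl (fun π _ => e π i j), Finset.sum_congr rfl (fun π _ => e π i' j')]
  exact perm_sum_pair (fun a b => W (u a) (v b)) i j i' j' hij hij'

lemma avgW_rrow {n : ℕ} (W : Matrix (Fin n ⊕ Fin n ⊕ Fin 2) (Fin n ⊕ Fin n) ℝ)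
    (t : Fin 2) (v : Fin n → (Fin n ⊕ Fin n))
    (hv : ∀ π i, colE n π (v i) = v (π i)) (j j' : Fin n) :
    avgW n W (Sum.inr (Sum.inr t)) (v j) = avgW n W (Sum.inr (Sum.inr t)) (v j') := by
  rw [avgW_apply, avgW_apply]
  congr 1
  have e : ∀ π : Equiv.Perm (Fin n), ∀ b,
      W (rowE n π (Sum.inr (Sum.inr t))) (colE n π (v b)) =
      W (Sum.inr (Sum.inr t)) (v (π b)) := fun π b => by rw [rowE_inrr, hv]
  rw [Finset.sum_congr rfl (fun π _ => e π j), Finset.sum_congr rfl (fun π _ => e π j')]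
  exact perm_sum_single (fun a => W (Sum.inr (Sum.inr t)) (v a)) j j'

/-! Entry lemmas for `restrictedW` and extraction of the parameter inequalities. -/

@[simp] lemma restrictedW_ll {n : ℕ} {a1 a2 b1 b2 c1 c2 d1 d2 e f g h : ℝ} (i j : Fin n) :
    restrictedW n a1 a2 b1 b2 c1 c2 d1 d2 e f g h (Sum.inl i) (Sum.inl j)
      = (if i = j then a1 else 0) + a2 := rfl
@[simp] lemma restrictedW_lr {n : ℕ} {a1 a2 b1 b2 c1 c2 d1 d2 e f g h : ℝ} (i j : Fin n) :
    restrictedW n a1 a2 b1 b2 c1 c2 d1 d2 e f g h (Sum.inl i) (Sum.inr j)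
      = (if i = j then c1 else 0) + c2 := rfl
@[simp] lemma restrictedW_rl {n : ℕ} {a1 a2 b1 b2 c1 c2 d1 d2 e f g h : ℝ} (i j : Fin n) :
    restrictedW n a1 a2 b1 b2 c1 c2 d1 d2 e f g h (Sum.inr (Sum.inl i)) (Sum.inl j)
      = (if i = j then b1 else 0) + b2 := rfl
@[simp] lemma restrictedW_rr {n : ℕ} {a1 a2 b1 b2 c1 c2 d1 d2 e f g h : ℝ} (i j : Fin n) :
    restrictedW n a1 a2 b1 b2 c1 c2 d1 d2 e f g h (Sum.inr (Sum.inl i)) (Sum.inr j)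
      = (if i = j then d1 else 0) + d2 := rfl
@[simp] lemma restrictedW_tl {n : ℕ} {a1 a2 b1 b2 c1 c2 d1 d2 e f g h : ℝ} (t : Fin 2)
    (j : Fin n) : restrictedW n a1 a2 b1 b2 c1 c2 d1 d2 e f g h (Sum.inr (Sum.inr t)) (Sum.inl j)
      = if t = 0 then e else f := rfl
@[simp] lemma restrictedW_tr {n : ℕ} {a1 a2 b1 b2 c1 c2 d1 d2 e f g h : ℝ} (t : Fin 2)
    (j : Fin n) : restrictedW n a1 a2 b1 b2 c1 c2 d1 d2 e f g h (Sum.inr (Sum.inr t)) (Sum.inr j)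
      = if t = 0 then g else h := rfl

lemma fin2_eq_one : ∀ t : Fin 2, t ≠ 0 → t = 1 := by decide

lemma restricted_ineqsA {n : ℕ} (hn : 1 ≤ n) {a1 a2 b1 b2 c1 c2 d1 d2 e f g h : ℝ}
    (hOne : OneHopMargin n (restrictedW n a1 a2 b1 b2 c1 c2 d1 d2 e f g h))
    (hId : IdentityMargin n (restrictedW n a1 a2 b1 b2 c1 c2 d1 d2 e f g h)) :
    c1 + c2 + g + 1 ≤ a1 + a2 + e ∧ b1 + b2 + f + 1 ≤ d1 + d2 + h ∧
      d1 + d2 + 1 ≤ b1 + b2 := by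
  have i0 : Fin n := ⟨0, hn⟩
  have h4 := (hOne ⟨0, hn⟩).1 (Sum.inr ⟨0, hn⟩) (by simp)
  have h5 := (hOne ⟨0, hn⟩).2 (Sum.inl ⟨0, hn⟩) (by simp)
  have h6 := hId ⟨0, hn⟩ (Sum.inr ⟨0, hn⟩) (by simp)
  have h10 : (1 : Fin 2) ≠ 0 := by decide
  simp only [restrictedW_ll, restrictedW_lr, restrictedW_rl, restrictedW_rr, restrictedW_tl,
    restrictedW_tr, eq_self_iff_true, if_true, if_neg h10, ge_iff_le] at h4 h5 h6
  exact ⟨by linarith, by linarith, by linarith⟩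

lemma restricted_ineqsB {n : ℕ} (hlt : 1 < n) {a1 a2 b1 b2 c1 c2 d1 d2 e f g h : ℝ}
    (hOne : OneHopMargin n (restrictedW n a1 a2 b1 b2 c1 c2 d1 d2 e f g h))
    (hId : IdentityMargin n (restrictedW n a1 a2 b1 b2 c1 c2 d1 d2 e f g h)) :
    1 ≤ a1 ∧ 1 ≤ b1 ∧ 1 ≤ d1 := by
  have hn : 1 ≤ n := le_of_lt hlt
  have hne : (⟨0, hn⟩ : Fin n) ≠ ⟨1, hlt⟩ := by simp [Fin.ext_iff]
  have h1 := (hOne ⟨0, hn⟩).1 (Sum.inl ⟨1, hlt⟩) (by simp [Fin.ext_iff])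
  have h2 := hId ⟨0, hn⟩ (Sum.inl ⟨1, hlt⟩) (by simp [Fin.ext_iff])
  have h3 := (hOne ⟨0, hn⟩).2 (Sum.inr ⟨1, hlt⟩) (by simp [Fin.ext_iff])
  have h10 : (1 : Fin 2) ≠ 0 := by decide
  simp only [restrictedW_ll, restrictedW_lr, restrictedW_rl, restrictedW_rr, restrictedW_tl,
    restrictedW_tr, eq_self_iff_true, if_true, if_neg h10, if_neg hne, ge_iff_le] at h1 h2 h3
  exact ⟨by linarith, by linarith, by linarith⟩

/-- Lemma 1 (existence of a restricted-form solution): if the minimum of the nuclear norm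
over all matrices satisfying the one-hop-plus-identity margin constraints is attained,
then it is attained by a restricted-form matrix whose parameters satisfy
`a1 ≥ 1`, `b1 ≥ 1`, `d1 ≥ 1`, `a1+a2+e ≥ c1+c2+g+1`, `d1+d2+h ≥ b1+b2+f+1`,
and `b1+b2 ≥ d1+d2+1`. -/
theorem restricted_form_solution_with_identity (n : ℕ) (hn : 1 ≤ n)
    (W0 : Matrix (Fin n ⊕ Fin n ⊕ Fin 2) (Fin n ⊕ Fin n) ℝ)
    (hW0 : OneHopMargin n W0 ∧ IdentityMargin n W0)
    (hmin : ∀ W : Matrix (Fin n ⊕ Fin n ⊕ Fin 2) (Fin n ⊕ Fin n) ℝ,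
      OneHopMargin n W ∧ IdentityMargin n W → nuclearNorm W0 ≤ nuclearNorm W) :
    ∃ a1 a2 b1 b2 c1 c2 d1 d2 e f g h : ℝ,
      OneHopMargin n (restrictedW n a1 a2 b1 b2 c1 c2 d1 d2 e f g h) ∧
      IdentityMargin n (restrictedW n a1 a2 b1 b2 c1 c2 d1 d2 e f g h) ∧
      nuclearNorm (restrictedW n a1 a2 b1 b2 c1 c2 d1 d2 e f g h) = nuclearNorm W0 ∧
      1 ≤ a1 ∧ 1 ≤ b1 ∧ 1 ≤ d1 ∧
      c1 + c2 + g + 1 ≤ a1 + a2 + e ∧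
      b1 + b2 + f + 1 ≤ d1 + d2 + h ∧
      d1 + d2 + 1 ≤ b1 + b2 := by
  classical
  have hbar := avgW_margin hW0
  have hnorm : nuclearNorm (avgW n W0) = nuclearNorm W0 :=
    le_antisymm (avgW_nn W0) (hmin _ hbar)
  have hu1 : ∀ (π : Equiv.Perm (Fin n)) (i : Fin n),
      rowE n π (Sum.inl i) = Sum.inl (π i) := fun _ _ => rfl
  have hu2 : ∀ (π : Equiv.Perm (Fin n)) (i : Fin n),
      rowE n π (Sum.inr (Sum.inl i)) = Sum.inr (Sum.inl (π i)) := fun _ _ => rfl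
  have hv1 : ∀ (π : Equiv.Perm (Fin n)) (i : Fin n),
      colE n π (Sum.inl i) = Sum.inl (π i) := fun _ _ => rfl
  have hv2 : ∀ (π : Equiv.Perm (Fin n)) (i : Fin n),
      colE n π (Sum.inr i) = Sum.inr (π i) := fun _ _ => rfl
  by_cases hlt : 1 < n
  · -- main case `n ≥ 2`
    set i0 : Fin n := ⟨0, hn⟩ with hi0
    set j1 : Fin n := ⟨1, hlt⟩ with hj1
    have h01 : i0 ≠ j1 := by simp [hi0, hj1, Fin.ext_iff]
    refine ⟨avgW n W0 (Sum.inl i0) (Sum.inl i0) - avgW n W0 (Sum.inl i0) (Sum.inl j1),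
      avgW n W0 (Sum.inl i0) (Sum.inl j1),
      avgW n W0 (Sum.inr (Sum.inl i0)) (Sum.inl i0) - avgW n W0 (Sum.inr (Sum.inl i0)) (Sum.inl j1),
      avgW n W0 (Sum.inr (Sum.inl i0)) (Sum.inl j1),
      avgW n W0 (Sum.inl i0) (Sum.inr i0) - avgW n W0 (Sum.inl i0) (Sum.inr j1),
      avgW n W0 (Sum.inl i0) (Sum.inr j1),
      avgW n W0 (Sum.inr (Sum.inl i0)) (Sum.inr i0) - avgW n W0 (Sum.inr (Sum.inl i0)) (Sum.inr j1),
      avgW n W0 (Sum.inr (Sum.inl i0)) (Sum.inr j1),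
      avgW n W0 (Sum.inr (Sum.inr 0)) (Sum.inl i0),
      avgW n W0 (Sum.inr (Sum.inr 1)) (Sum.inl i0),
      avgW n W0 (Sum.inr (Sum.inr 0)) (Sum.inr i0),
      avgW n W0 (Sum.inr (Sum.inr 1)) (Sum.inr i0), ?_⟩
    have hrep : avgW n W0 = restrictedW n
        (avgW n W0 (Sum.inl i0) (Sum.inl i0) - avgW n W0 (Sum.inl i0) (Sum.inl j1))
        (avgW n W0 (Sum.inl i0) (Sum.inl j1))
        (avgW n W0 (Sum.inr (Sum.inl i0)) (Sum.inl i0) -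
          avgW n W0 (Sum.inr (Sum.inl i0)) (Sum.inl j1))
        (avgW n W0 (Sum.inr (Sum.inl i0)) (Sum.inl j1))
        (avgW n W0 (Sum.inl i0) (Sum.inr i0) - avgW n W0 (Sum.inl i0) (Sum.inr j1))
        (avgW n W0 (Sum.inl i0) (Sum.inr j1))
        (avgW n W0 (Sum.inr (Sum.inl i0)) (Sum.inr i0) -
          avgW n W0 (Sum.inr (Sum.inl i0)) (Sum.inr j1))
        (avgW n W0 (Sum.inr (Sum.inl i0)) (Sum.inr j1))
        (avgW n W0 (Sum.inr (Sum.inr 0)) (Sum.inl i0))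
        (avgW n W0 (Sum.inr (Sum.inr 1)) (Sum.inl i0))
        (avgW n W0 (Sum.inr (Sum.inr 0)) (Sum.inr i0))
        (avgW n W0 (Sum.inr (Sum.inr 1)) (Sum.inr i0)) := by
      funext r y
      cases r with
      | inl i =>
        cases y with
        | inl j =>
          rw [restrictedW_ll]
          by_cases hij : i = j
          · subst hij
            rw [if_pos rfl, avgW_diag W0 Sum.inl Sum.inl hu1 hv1 i i0]
            ring
          · rw [if_neg hij, zero_add]
            exact avgW_off W0 Sum.inl Sum.inl hu1 hv1 i j i0 j1 hij h01
        | inr j =>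
          rw [restrictedW_lr]
          by_cases hij : i = j
          · subst hij
            rw [if_pos rfl, avgW_diag W0 Sum.inl Sum.inr hu1 hv2 i i0]
            ring
          · rw [if_neg hij, zero_add]
            exact avgW_off W0 Sum.inl Sum.inr hu1 hv2 i j i0 j1 hij h01
      | inr rr =>
        cases rr with
        | inl i =>
          cases y with
          | inl j =>
            rw [restrictedW_rl]
            by_cases hij : i = j
            · subst hij
              rw [if_pos rfl,
                avgW_diag W0 (fun a => Sum.inr (Sum.inl a)) Sum.inl hu2 hv1 i i0]
              ring
            · rw [if_neg hij, zero_add]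
              exact avgW_off W0 (fun a => Sum.inr (Sum.inl a)) Sum.inl hu2 hv1 i j i0 j1 hij h01
          | inr j =>
            rw [restrictedW_rr]
            by_cases hij : i = j
            · subst hij
              rw [if_pos rfl,
                avgW_diag W0 (fun a => Sum.inr (Sum.inl a)) Sum.inr hu2 hv2 i i0]
              ring
            · rw [if_neg hij, zero_add]
              exact avgW_off W0 (fun a => Sum.inr (Sum.inl a)) Sum.inr hu2 hv2 i j i0 j1 hij h01
        | inr t =>
          cases y with
          | inl j =>
            rw [restrictedW_tl]
            by_cases ht : t = 0
            · rw [if_pos ht, ht]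
              exact avgW_rrow W0 0 Sum.inl hv1 j i0
            · rw [if_neg ht, fin2_eq_one t ht]
              exact avgW_rrow W0 1 Sum.inl hv1 j i0
          | inr j =>
            rw [restrictedW_tr]
            by_cases ht : t = 0
            · rw [if_pos ht, ht]
              exact avgW_rrow W0 0 Sum.inr hv2 j i0
            · rw [if_neg ht, fin2_eq_one t ht]
              exact avgW_rrow W0 1 Sum.inr hv2 j i0
    have hOne : OneHopMargin n _ := hrep ▸ hbar.1
    have hId : IdentityMargin n _ := hrep ▸ hbar.2
    obtain ⟨q1, q2, q3⟩ := restricted_ineqsA hn hOne hId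
    obtain ⟨p1, p2, p3⟩ := restricted_ineqsB hlt hOne hId
    exact ⟨hOne, hId, by rw [← hrep]; exact hnorm, p1, p2, p3, q1, q2, q3⟩
  · -- case `n = 1`
    have hn1 : n = 1 := by omega
    subst hn1
    have hall : ∀ i : Fin 1, i = (⟨0, hn⟩ : Fin 1) := fun i => Subsingleton.elim _ _
    set i0 : Fin 1 := ⟨0, hn⟩ with hi0
    refine ⟨1, avgW 1 W0 (Sum.inl i0) (Sum.inl i0) - 1,
      1, avgW 1 W0 (Sum.inr (Sum.inl i0)) (Sum.inl i0) - 1,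
      1, avgW 1 W0 (Sum.inl i0) (Sum.inr i0) - 1,
      1, avgW 1 W0 (Sum.inr (Sum.inl i0)) (Sum.inr i0) - 1,
      avgW 1 W0 (Sum.inr (Sum.inr 0)) (Sum.inl i0),
      avgW 1 W0 (Sum.inr (Sum.inr 1)) (Sum.inl i0),
      avgW 1 W0 (Sum.inr (Sum.inr 0)) (Sum.inr i0),
      avgW 1 W0 (Sum.inr (Sum.inr 1)) (Sum.inr i0), ?_⟩
    have hrep : avgW 1 W0 = restrictedW 1
        1 (avgW 1 W0 (Sum.inl i0) (Sum.inl i0) - 1)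
        1 (avgW 1 W0 (Sum.inr (Sum.inl i0)) (Sum.inl i0) - 1)
        1 (avgW 1 W0 (Sum.inl i0) (Sum.inr i0) - 1)
        1 (avgW 1 W0 (Sum.inr (Sum.inl i0)) (Sum.inr i0) - 1)
        (avgW 1 W0 (Sum.inr (Sum.inr 0)) (Sum.inl i0))
        (avgW 1 W0 (Sum.inr (Sum.inr 1)) (Sum.inl i0))
        (avgW 1 W0 (Sum.inr (Sum.inr 0)) (Sum.inr i0))
        (avgW 1 W0 (Sum.inr (Sum.inr 1)) (Sum.inr i0)) := by
      funext r y
      cases r with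
      | inl i =>
        cases y with
        | inl j =>
          rw [restrictedW_ll, hall i, hall j, if_pos rfl]
          ring
        | inr j =>
          rw [restrictedW_lr, hall i, hall j, if_pos rfl]
          ring
      | inr rr =>
        cases rr with
        | inl i =>
          cases y with
          | inl j =>
            rw [restrictedW_rl, hall i, hall j, if_pos rfl]
            ring
          | inr j =>
            rw [restrictedW_rr, hall i, hall j, if_pos rfl]
            ring
        | inr t =>
          cases y with
          | inl j =>
            rw [restrictedW_tl, hall j]
            by_cases ht : t = 0
            · rw [if_pos ht, ht]
            · rw [if_neg ht, fin2_eq_one t ht]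
          | inr j =>
            rw [restrictedW_tr, hall j]
            by_cases ht : t = 0
            · rw [if_pos ht, ht]
            · rw [if_neg ht, fin2_eq_one t ht]
    have hOne : OneHopMargin 1 _ := hrep ▸ hbar.1
    have hId : IdentityMargin 1 _ := hrep ▸ hbar.2
    obtain ⟨q1, q2, q3⟩ := restricted_ineqsA hn hOne hId
    exact ⟨hOne, hId, by rw [← hrep]; exact hnorm, le_refl 1, le_refl 1, le_refl 1, q1, q2, q3⟩
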